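/- For every even natural number k and every integer n there exists a polynomial P of degree at most k such that for every complex number x with sinh x ≠ 0, the k-th derivative of z ↦ (sinh z)^n (integer power) at x equals (sinh x)^(n−k) · P(sinh x); and for every odd natural number k and every integer n there exists a polynomial P of degree at most k − 1 such that for every complex number x with sinh x ≠ 0, the k-th derivative of z ↦ (sinh z)^n at x equals (sinh x)^(n−k) · cosh x · P(sinh x). The analogous statement holds for cosh: for k even there is a polynomial P of degree at most k with k-th derivative of z ↦ (cosh z)^n at x equal to (cosh x)^(n−k) · P(cosh x) whenever cosh x ≠ 0, and for k odd a polynomial P of degree at most k − 1 with the k-th derivative equal to (cosh x)^(n−k) · sinh x · P(cosh x). -/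

import Mathlib

open Polynomial Filter Topology

lemma degXmulderiv (P : ℂ[X]) : (X * derivative P).degree ≤ P.degree := by
  rcases eq_or_ne (derivative P) 0 with h0 | h0
  · simp [h0]
  have hP0 : P ≠ 0 := by rintro rfl; simp at h0
  rw [degree_mul, degree_X]
  have hlt := degree_derivative_lt hP0
  rw [degree_eq_natDegree h0, degree_eq_natDegree hP0] at *
  have h2 : (derivative P).natDegree < P.natDegree := by exact_mod_cast hlt
  have : ((1 + (derivative P).natDegree : ℕ) : WithBot ℕ) ≤ (P.natDegree : ℕ) :=
    Nat.cast_le.mpr (by omega)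
  exact_mod_cast this

lemma degCmul (c : ℂ) (p : ℂ[X]) : (C c * p).degree ≤ p.degree :=
  (degree_mul_le _ _).trans (by simpa using add_le_add degree_C_le (le_refl p.degree))

lemma degCX2 (ε : ℂ) : (C ε + X ^ 2 : ℂ[X]).degree ≤ 2 :=
  le_trans (degree_add_le _ _)
    (max_le (degree_C_le.trans (by norm_num)) (by simp [degree_X_pow]))

lemma key (f g : ℂ → ℂ) (ε : ℂ)
    (hf : ∀ x, HasDerivAt f (g x) x) (hg : ∀ x, HasDerivAt g (f x) x)
    (hrel : ∀ x, g x ^ 2 = ε + f x ^ 2) (k : ℕ) (n : ℤ) :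
    (Even k → ∃ P : ℂ[X], P.degree ≤ (k : ℕ) ∧
      ∀ x : ℂ, f x ≠ 0 →
        iteratedDeriv k (fun z : ℂ => f z ^ n) x = f x ^ (n - (k : ℤ)) * P.eval (f x)) ∧
    (Odd k → ∃ P : ℂ[X], P.degree ≤ (k - 1 : ℕ) ∧
      ∀ x : ℂ, f x ≠ 0 →
        iteratedDeriv k (fun z : ℂ => f z ^ n) x =
          f x ^ (n - (k : ℤ)) * g x * P.eval (f x)) := by
  induction k with
  | zero =>
    exact ⟨fun _ => ⟨1, by simp, fun x hx => by simp [iteratedDeriv_zero]⟩,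
      fun h => absurd h (by decide)⟩
  | succ k ih =>
    constructor
    · -- k+1 even, so k odd
      intro hev
      have hodd : Odd k := Nat.not_even_iff_odd.mp (Nat.even_add_one.mp hev)
      obtain ⟨P, hPdeg, hP⟩ := ih.2 hodd
      have hk1 : 1 ≤ k := hodd.pos
      refine ⟨C ((n : ℂ) - (k : ℕ)) * ((C ε + X ^ 2) * P) + X ^ 2 * P
          + (C ε + X ^ 2) * (X * derivative P), ?_, ?_⟩
      · have h2 := degCX2 ε
        have hle : (2 : WithBot ℕ) + ((k - 1 : ℕ) : WithBot ℕ) ≤ ((k + 1 : ℕ) : WithBot ℕ) := by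
          have h' : ((2 + (k - 1) : ℕ) : WithBot ℕ) ≤ ((k + 1 : ℕ) : WithBot ℕ) :=
            Nat.cast_le.mpr (by omega)
          refine le_trans (le_of_eq ?_) h'
          push_cast; ring
        have t1 : ((C ε + X ^ 2 : ℂ[X]) * P).degree ≤ ((k + 1 : ℕ) : WithBot ℕ) := by
          exact le_trans (degree_mul_le _ _) (le_trans (add_le_add h2 hPdeg) hle)
        have t2 : ((X : ℂ[X]) ^ 2 * P).degree ≤ ((k + 1 : ℕ) : WithBot ℕ) := by
          refine le_trans (degree_mul_le _ _)
            (le_trans (add_le_add (le_of_eq (degree_X_pow 2)) hPdeg) (by exact_mod_cast hle))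
        have t3 : ((C ε + X ^ 2 : ℂ[X]) * (X * derivative P)).degree
            ≤ ((k + 1 : ℕ) : WithBot ℕ) := by
          exact le_trans (degree_mul_le _ _)
            (le_trans (add_le_add h2 ((degXmulderiv P).trans hPdeg)) hle)
        exact le_trans (degree_add_le _ _)
          (max_le (le_trans (degree_add_le _ _)
            (max_le ((degCmul _ _).trans t1) t2)) t3)
      · intro x hx
        rw [iteratedDeriv_succ]
        have hev' : iteratedDeriv k (fun z => f z ^ n)
            =ᶠ[𝓝 x] fun y => f y ^ (n - (k : ℤ)) * g y * P.eval (f y) :=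
          ((hf x).continuousAt.eventually_ne hx).mono fun y hy => hP y hy
        rw [hev'.deriv_eq]
        have h1 : HasDerivAt (fun z => f z ^ (n - (k : ℤ)))
            (((n : ℂ) - (k : ℕ)) * f x ^ (n - (k : ℤ) - 1) * g x) x := by
          have h0 := (hasDerivAt_zpow (n - (k : ℤ)) (f x) (Or.inl hx)).comp x (hf x)
          refine h0.congr_deriv ?_
          push_cast; ring
        have h2 : HasDerivAt (fun z => P.eval (f z)) (P.derivative.eval (f x) * g x) x :=
          (P.hasDerivAt (f x)).comp x (hf x)
        have hD := (h1.mul (hg x)).mul h2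
        rw [(show HasDerivAt (fun y => f y ^ (n - (k : ℤ)) * g y * P.eval (f y)) _ x from hD).deriv]
        have hm : f x ^ (n - (k : ℤ)) = f x ^ (n - (k : ℤ) - 1) * f x := by
          rw [← zpow_add_one₀ hx, sub_add_cancel]
        have hcast2 : n - ((k + 1 : ℕ) : ℤ) = n - (k : ℤ) - 1 := by push_cast; ring
        have hg2 : g x * g x = ε + f x ^ 2 := by rw [← hrel x]; ring
        simp only [eval_add, eval_mul, eval_C, eval_X, eval_pow, Pi.mul_apply]
        rw [hcast2, hm]
        linear_combination (((n : ℂ) - (k : ℕ)) * f x ^ (n - (k : ℤ) - 1) * P.eval (f x)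
          + f x ^ (n - (k : ℤ) - 1) * f x * (derivative P).eval (f x)) * hg2
    · -- k+1 odd, so k even
      intro hodd
      have hev : Even k := by
        rcases Nat.even_or_odd k with h | h
        · exact h
        · exact absurd (Nat.even_add_one.mpr (Nat.not_even_iff_odd.mpr h)) (Nat.not_even_iff_odd.mpr hodd)
      obtain ⟨P, hPdeg, hP⟩ := ih.1 hev
      refine ⟨C ((n : ℂ) - (k : ℕ)) * P + X * derivative P, ?_, ?_⟩
      · simp only [Nat.add_sub_cancel]
        exact le_trans (degree_add_le _ _)
          (max_le ((degCmul _ _).trans hPdeg) ((degXmulderiv P).trans hPdeg))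
      · intro x hx
        rw [iteratedDeriv_succ]
        have hev' : iteratedDeriv k (fun z => f z ^ n)
            =ᶠ[𝓝 x] fun y => f y ^ (n - (k : ℤ)) * P.eval (f y) :=
          ((hf x).continuousAt.eventually_ne hx).mono fun y hy => hP y hy
        rw [hev'.deriv_eq]
        have h1 : HasDerivAt (fun z => f z ^ (n - (k : ℤ)))
            (((n : ℂ) - (k : ℕ)) * f x ^ (n - (k : ℤ) - 1) * g x) x := by
          have h0 := (hasDerivAt_zpow (n - (k : ℤ)) (f x) (Or.inl hx)).comp x (hf x)
          refine h0.congr_deriv ?_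
          push_cast; ring
        have h2 : HasDerivAt (fun z => P.eval (f z)) (P.derivative.eval (f x) * g x) x :=
          (P.hasDerivAt (f x)).comp x (hf x)
        have hD := h1.mul h2
        rw [(show HasDerivAt (fun y => f y ^ (n - (k : ℤ)) * P.eval (f y)) _ x from hD).deriv]
        have hm : f x ^ (n - (k : ℤ)) = f x ^ (n - (k : ℤ) - 1) * f x := by
          rw [← zpow_add_one₀ hx, sub_add_cancel]
        have hcast2 : n - ((k + 1 : ℕ) : ℤ) = n - (k : ℤ) - 1 := by push_cast; ring
        simp only [eval_add, eval_mul, eval_C, eval_X]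
        rw [hcast2, hm]
        ring

theorem iteratedDeriv_sinh_cosh_zpow_exists_poly (k : ℕ) (n : ℤ) :
    (Even k → ∃ P : Polynomial ℂ, P.degree ≤ (k : ℕ) ∧
      ∀ x : ℂ, Complex.sinh x ≠ 0 →
        iteratedDeriv k (fun z : ℂ => Complex.sinh z ^ n) x =
          Complex.sinh x ^ (n - (k : ℤ)) * P.eval (Complex.sinh x)) ∧
    (Odd k → ∃ P : Polynomial ℂ, P.degree ≤ (k - 1 : ℕ) ∧
      ∀ x : ℂ, Complex.sinh x ≠ 0 →
        iteratedDeriv k (fun z : ℂ => Complex.sinh z ^ n) x =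
          Complex.sinh x ^ (n - (k : ℤ)) * Complex.cosh x * P.eval (Complex.sinh x)) ∧
    (Even k → ∃ P : Polynomial ℂ, P.degree ≤ (k : ℕ) ∧
      ∀ x : ℂ, Complex.cosh x ≠ 0 →
        iteratedDeriv k (fun z : ℂ => Complex.cosh z ^ n) x =
          Complex.cosh x ^ (n - (k : ℤ)) * P.eval (Complex.cosh x)) ∧
    (Odd k → ∃ P : Polynomial ℂ, P.degree ≤ (k - 1 : ℕ) ∧
      ∀ x : ℂ, Complex.cosh x ≠ 0 →
        iteratedDeriv k (fun z : ℂ => Complex.cosh z ^ n) x =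
          Complex.cosh x ^ (n - (k : ℤ)) * Complex.sinh x * P.eval (Complex.cosh x)) := by
  have h1 := key Complex.sinh Complex.cosh 1
    (fun x => Complex.hasDerivAt_sinh x) (fun x => Complex.hasDerivAt_cosh x)
    (fun x => by rw [Complex.cosh_sq]; ring) k n
  have h2 := key Complex.cosh Complex.sinh (-1)
    (fun x => Complex.hasDerivAt_cosh x) (fun x => Complex.hasDerivAt_sinh x)
    (fun x => by rw [Complex.sinh_sq]; ring) k n
  exact ⟨h1.1, h1.2, h2.1, h2.2⟩
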